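/- Let U be a weakly Ramsey non-selective ultrafilter with witnessing interval partition P, and suppose the cut A_P (generated upward by the functions a^A(x) = |A ∩ [p_n, x)|, A ∈ U) is strictly less than the cut B_P (generated upward by b^A(x) = |A ∩ [x, p_{n+1})|, A ∈ U) in the ultrapower ℕ^ℕ/U. Then U is f-quasi-selective for some function f that is one-to-one modulo U, and U is isomorphic to a quasi-selective ultrafilter. -/

import Mathlib

def Nonprincipal (U : Ultrafilter ℕ) : Prop := ∀ A : Set ℕ, A.Finite → A ∉ U

def UnboundedModU (U : Ultrafilter ℕ) (f : ℕ → ℕ) : Prop := ∀ n : ℕ, {x | n < f x} ∈ U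

def NondecrModU (U : Ultrafilter ℕ) (g : ℕ → ℕ) : Prop :=
  ∃ A ∈ U, ∀ x ∈ A, ∀ y ∈ A, x ≤ y → g x ≤ g y

def QSfor (U : Ultrafilter ℕ) (f : ℕ → ℕ) : Prop :=
  ∀ g : ℕ → ℕ, {x | g x ≤ f x} ∈ U → NondecrModU U g

def Selective (U : Ultrafilter ℕ) : Prop := ∀ g : ℕ → ℕ, NondecrModU U g

def Rapid (U : Ultrafilter ℕ) : Prop :=
  ∀ g : ℕ → ℕ, StrictMono g → ∃ A ∈ U, ∀ n, 1 ≤ n → (A ∩ Set.Iic (g n)).ncard < n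

def WeaklyRamsey (U : Ultrafilter ℕ) : Prop :=
  ∀ (k : ℕ) (c : ℕ → ℕ → Fin k), ∃ A ∈ U, ∃ i j : Fin k,
    ∀ x ∈ A, ∀ y ∈ A, x < y → c x y = i ∨ c x y = j

def leU (U : Ultrafilter ℕ) (f g : ℕ → ℕ) : Prop := {x | f x ≤ g x} ∈ U

def QPoint (U : Ultrafilter ℕ) : Prop :=
  ∀ p : ℕ → ℕ, p 0 = 0 → StrictMono p →
    ∃ A ∈ U, ∀ n, (A ∩ Set.Ico (p n) (p (n+1))).Subsingleton


def nuP (p : ℕ → ℕ) (x : ℕ) : ℕ := Nat.findGreatest (fun k => p k ≤ x) x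

lemma nuP_le (p : ℕ → ℕ) (hp0 : p 0 = 0) (x : ℕ) : p (nuP p x) ≤ x :=
  Nat.findGreatest_spec (P := fun k => p k ≤ x) (Nat.zero_le x) (by simp [hp0])

lemma nuP_lt (p : ℕ → ℕ) (hpm : StrictMono p) (x : ℕ) : x < p (nuP p x + 1) := by
  by_contra hcon
  push_neg at hcon
  have h1 : nuP p x + 1 ≤ x := le_trans hpm.le_apply hcon
  have h2 := Nat.le_findGreatest (P := fun k => p k ≤ x) h1 hcon
  simp only [nuP] at *
  omega

lemma nuP_eq (p : ℕ → ℕ) (hp0 : p 0 = 0) (hpm : StrictMono p) {n x : ℕ}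
    (h1 : p n ≤ x) (h2 : x < p (n+1)) : nuP p x = n := by
  rcases lt_trichotomy (nuP p x) n with h | h | h
  · have h3 : p (nuP p x + 1) ≤ p n := hpm.monotone (by omega)
    have := nuP_lt p hpm x
    omega
  · exact h
  · have h3 : p (n + 1) ≤ p (nuP p x) := hpm.monotone (by omega)
    have := nuP_le p hp0 x
    omega

lemma nuP_mem (p : ℕ → ℕ) (hp0 : p 0 = 0) (hpm : StrictMono p) {n x : ℕ}
    (h : nuP p x = n) : p n ≤ x ∧ x < p (n+1) := by
  subst h; exact ⟨nuP_le p hp0 x, nuP_lt p hpm x⟩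

section Main
variable (U : Ultrafilter ℕ) (p : ℕ → ℕ)

/-- A set meeting each interval in at most one point is not in U. -/
lemma not_selection (hp0 : p 0 = 0) (hpm : StrictMono p)
    (hsel : ¬ ∃ A ∈ U, ∀ n, (A ∩ Set.Ico (p n) (p (n+1))).Subsingleton)
    (M : Set ℕ) (hM : ∀ x ∈ M, ∀ y ∈ M, nuP p x = nuP p y → x = y) : M ∉ U := by
  intro hMU
  refine hsel ⟨M, hMU, fun n x hx y hy => ?_⟩
  exact hM x hx.1 y hy.1 (by
    rw [nuP_eq p hp0 hpm hx.2.1 hx.2.2, nuP_eq p hp0 hpm hy.2.1 hy.2.2])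

/-- Existence of a maximum of S in the interval of x. -/
lemma exists_max (hp0 : p 0 = 0) (hpm : StrictMono p) (S : Set ℕ) {x : ℕ} (hx : x ∈ S) :
    ∃ m ∈ S, nuP p m = nuP p x ∧ x ≤ m ∧ ∀ z ∈ S, nuP p z = nuP p x → z ≤ m := by
  set n := nuP p x with hn
  set F : Set ℕ := S ∩ Set.Ico (p n) (p (n+1)) with hF
  have hFfin : F.Finite := (Set.finite_Ico _ _).subset Set.inter_subset_right
  have hxF : x ∈ F := ⟨hx, nuP_le p hp0 x, nuP_lt p hpm x⟩
  obtain ⟨m, hmF, hmax⟩ := Set.Finite.exists_maximalFor id F hFfin ⟨x, hxF⟩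
  have hgreat : ∀ z ∈ F, z ≤ m := by
    intro z hz
    by_contra hc
    push_neg at hc
    have := hmax hz (le_of_lt hc)
    simp only [id] at this
    omega
  have hmnu : nuP p m = n := nuP_eq p hp0 hpm hmF.2.1 hmF.2.2
  refine ⟨m, hmF.1, hmnu, hgreat x hxF, fun z hz hznu => ?_⟩
  have := nuP_mem p hp0 hpm hznu
  exact hgreat z ⟨hz, this.1, this.2⟩

/-- Removing, from S, the maxima of S in each interval keeps it in U. -/
lemma remove_max (hp0 : p 0 = 0) (hpm : StrictMono p)
    (hsel : ¬ ∃ A ∈ U, ∀ n, (A ∩ Set.Ico (p n) (p (n+1))).Subsingleton)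
    (S : Set ℕ) (hS : S ∈ U) :
    S \ {m | m ∈ S ∧ ∀ z ∈ S, nuP p z = nuP p m → z ≤ m} ∈ U := by
  set M : Set ℕ := {m | m ∈ S ∧ ∀ z ∈ S, nuP p z = nuP p m → z ≤ m} with hMdef
  have hMnot : M ∉ U := by
    refine not_selection U p hp0 hpm hsel M fun x hx y hy hnu => ?_
    exact le_antisymm (hy.2 x hx.1 hnu) (hx.2 y hy.1 hnu.symm)
  have : Mᶜ ∈ U := Ultrafilter.compl_mem_iff_notMem.2 hMnot
  rw [Set.diff_eq]
  exact Filter.inter_mem hS this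

end Main

section Main2
variable (U : Ultrafilter ℕ) (p : ℕ → ℕ)

/-- A set meeting each interval in at most k points is not in U. -/
lemma bounded_layers (hp0 : p 0 = 0) (hpm : StrictMono p)
    (hsel : ¬ ∃ A ∈ U, ∀ n, (A ∩ Set.Ico (p n) (p (n+1))).Subsingleton) :
    ∀ (k : ℕ) (S : Set ℕ), (∀ n, (S ∩ Set.Ico (p n) (p (n+1))).ncard ≤ k) → S ∉ U := by
  intro k
  induction k with
  | zero =>
    intro S hcard hSU
    have hemp : S = ∅ := by
      ext x
      simp only [Set.mem_empty_iff_false, iff_false]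
      intro hx
      have hfin : (S ∩ Set.Ico (p (nuP p x)) (p (nuP p x + 1))).Finite :=
        (Set.finite_Ico _ _).subset Set.inter_subset_right
      have h0 := hcard (nuP p x)
      have : (S ∩ Set.Ico (p (nuP p x)) (p (nuP p x + 1))) = ∅ :=
        (Set.ncard_eq_zero hfin).1 (by omega)
      have hxmem : x ∈ S ∩ Set.Ico (p (nuP p x)) (p (nuP p x + 1)) :=
        ⟨hx, nuP_le p hp0 x, nuP_lt p hpm x⟩
      rw [this] at hxmem
      exact hxmem
    rw [hemp] at hSU
    exact Filter.empty_notMem (U : Filter ℕ) hSU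
  | succ k ih =>
    intro S hcard hSU
    set M : Set ℕ := {m | m ∈ S ∧ ∀ z ∈ S, nuP p z = nuP p m → z ≤ m} with hMdef
    have hTU : S \ M ∈ U := remove_max U p hp0 hpm hsel S hSU
    refine ih (S \ M) (fun n => ?_) hTU
    by_cases hne : (S ∩ Set.Ico (p n) (p (n+1))).Nonempty
    · obtain ⟨x, hxS, hxIco⟩ := hne
      have hxnu : nuP p x = n := nuP_eq p hp0 hpm hxIco.1 hxIco.2
      obtain ⟨m, hmS, hmnu, hxm, hmax⟩ := exists_max p hp0 hpm S hxS
      have hmM : m ∈ M := ⟨hmS, fun z hz hznu => hmax z hz (by rw [hznu, hmnu])⟩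
      have hmIco : m ∈ Set.Ico (p n) (p (n+1)) := by
        have := nuP_mem p hp0 hpm (hmnu.trans hxnu)
        exact ⟨this.1, this.2⟩
      have hsub : (S \ M) ∩ Set.Ico (p n) (p (n+1))
          ⊆ (S ∩ Set.Ico (p n) (p (n+1))) \ {m} := by
        intro z hz
        refine ⟨⟨hz.1.1, hz.2⟩, ?_⟩
        simp only [Set.mem_singleton_iff]
        intro hzm
        exact hz.1.2 (hzm ▸ hmM)
      have hfin : (S ∩ Set.Ico (p n) (p (n+1))).Finite :=
        (Set.finite_Ico _ _).subset Set.inter_subset_right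
      have hmmem : m ∈ S ∩ Set.Ico (p n) (p (n+1)) := ⟨hmS, hmIco⟩
      have h1 : ((S ∩ Set.Ico (p n) (p (n+1))) \ {m}).ncard
          = (S ∩ Set.Ico (p n) (p (n+1))).ncard - 1 :=
        Set.ncard_diff_singleton_of_mem hmmem
      have h2 := Set.ncard_le_ncard hsub (hfin.subset Set.diff_subset)
      have h3 := hcard n
      have h4 : 1 ≤ (S ∩ Set.Ico (p n) (p (n+1))).ncard :=
        (Set.ncard_pos hfin).2 ⟨m, hmmem⟩
      omega
    · have : (S \ M) ∩ Set.Ico (p n) (p (n+1)) ⊆ S ∩ Set.Ico (p n) (p (n+1)) :=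
        Set.inter_subset_inter_left _ Set.diff_subset
      have hemp : S ∩ Set.Ico (p n) (p (n+1)) = ∅ := Set.not_nonempty_iff_eq_empty.1 hne
      have : (S \ M) ∩ Set.Ico (p n) (p (n+1)) = ∅ :=
        Set.eq_empty_of_subset_empty (hemp ▸ this)
      simp [this]

end Main2

section Main3
variable (U : Ultrafilter ℕ) (p : ℕ → ℕ)

lemma gap_lemma (hp0 : p 0 = 0) (hpm : StrictMono p)
    (hsel : ¬ ∃ A ∈ U, ∀ n, (A ∩ Set.Ico (p n) (p (n+1))).Subsingleton)
    (b : Set ℕ → ℕ → ℕ)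
    (habb : ∀ (A : Set ℕ) (n x : ℕ), p n ≤ x → x < p (n+1) →
      b A x = (A ∩ Set.Ico x (p (n+1))).ncard)
    (h : ℕ → ℕ) (hb : ∀ A ∈ U, {x | h x < b A x} ∈ U) :
    ∀ (c : ℕ) (C : Set ℕ), C ∈ U → {x | h x + c < b C x} ∈ U := by
  intro c
  induction c with
  | zero => intro C hC; simpa using hb C hC
  | succ c ih =>
    intro C hC
    set M : Set ℕ := {m | m ∈ C ∧ ∀ z ∈ C, nuP p z = nuP p m → z ≤ m} with hMdef
    have hC' : C \ M ∈ U := remove_max U p hp0 hpm hsel C hC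
    refine Filter.mem_of_superset (ih (C \ M) hC') ?_
    intro x hx
    simp only [Set.mem_setOf_eq] at hx ⊢
    set n := nuP p x with hn
    have hxmem := nuP_mem p hp0 hpm hn.symm
    have hbC' : b (C \ M) x = ((C \ M) ∩ Set.Ico x (p (n+1))).ncard :=
      habb (C \ M) n x hxmem.1 hxmem.2
    have hbC : b C x = (C ∩ Set.Ico x (p (n+1))).ncard :=
      habb C n x hxmem.1 hxmem.2
    rw [hbC'] at hx
    -- the set is nonempty
    have hfin : ((C \ M) ∩ Set.Ico x (p (n+1))).Finite :=
      (Set.finite_Ico _ _).subset Set.inter_subset_right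
    have hne : ((C \ M) ∩ Set.Ico x (p (n+1))).Nonempty := by
      rw [← Set.ncard_pos hfin]; omega
    obtain ⟨y, hyC', hyIco⟩ := hne
    have hynu : nuP p y = n :=
      nuP_eq p hp0 hpm (le_trans hxmem.1 hyIco.1) hyIco.2
    obtain ⟨m, hmC, hmnu, hym, hmax⟩ := exists_max p hp0 hpm C hyC'.1
    have hmM : m ∈ M := ⟨hmC, fun z hz hznu => hmax z hz (by rw [hznu, hmnu])⟩
    have hmnun : nuP p m = n := hmnu.trans hynu
    have hmmem := nuP_mem p hp0 hpm hmnun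
    have hmIco : m ∈ Set.Ico x (p (n+1)) := ⟨le_trans hyIco.1 hym, hmmem.2⟩
    have hsub : insert m ((C \ M) ∩ Set.Ico x (p (n+1))) ⊆ C ∩ Set.Ico x (p (n+1)) := by
      intro z hz
      rcases hz with rfl | hz
      · exact ⟨hmC, hmIco⟩
      · exact ⟨hz.1.1, hz.2⟩
    have hnotmem : m ∉ (C \ M) ∩ Set.Ico x (p (n+1)) := fun hc => hc.1.2 hmM
    have hcard : (insert m ((C \ M) ∩ Set.Ico x (p (n+1)))).ncard
        = ((C \ M) ∩ Set.Ico x (p (n+1))).ncard + 1 :=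
      Set.ncard_insert_of_notMem hnotmem hfin
    have hcfin : (C ∩ Set.Ico x (p (n+1))).Finite :=
      (Set.finite_Ico _ _).subset Set.inter_subset_right
    have hle := Set.ncard_le_ncard hsub hcfin
    omega

end Main3

section Main4
variable (U : Ultrafilter ℕ) (p : ℕ → ℕ)

lemma no_interval_constant (hp0 : p 0 = 0) (hpm : StrictMono p)
    (hsel : ¬ ∃ A ∈ U, ∀ n, (A ∩ Set.Ico (p n) (p (n+1))).Subsingleton)
    (a b : Set ℕ → ℕ → ℕ)
    (hab : ∀ (A : Set ℕ) (n x : ℕ), p n ≤ x → x < p (n+1) →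
      a A x = (A ∩ Set.Ico (p n) x).ncard ∧ b A x = (A ∩ Set.Ico x (p (n+1))).ncard)
    (h : ℕ → ℕ) (A₀ : Set ℕ) (hA₀U : A₀ ∈ U) (hA₀ : {x | a A₀ x ≤ h x} ∈ U)
    (hb : ∀ A ∈ U, {x | h x < b A x} ∈ U)
    (B : Set ℕ) (hBU : B ∈ U)
    (hconst : ∀ x ∈ B, ∀ y ∈ B, nuP p x = nuP p y → h x = h y) : False := by
  set C : Set ℕ := B ∩ A₀ ∩ {x | a A₀ x ≤ h x} with hCdef
  have hCU : C ∈ U := Filter.inter_mem (Filter.inter_mem hBU hA₀U) hA₀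
  have hE : {x | h x + 1 < b C x} ∈ U :=
    gap_lemma U p hp0 hpm hsel b (fun A n x h1 h2 => (hab A n x h1 h2).2) h hb 1 C hCU
  obtain ⟨x₀, hx₀C, hx₀E⟩ := Ultrafilter.nonempty_of_mem (Filter.inter_mem hCU hE)
  simp only [Set.mem_setOf_eq] at hx₀E
  set n := nuP p x₀ with hn
  have hx₀mem := nuP_mem p hp0 hpm hn.symm
  -- the maximum m of C in interval n
  obtain ⟨m, hmC, hmnu, hx₀m, hmax⟩ := exists_max p hp0 hpm C hx₀C
  have hmmem := nuP_mem p hp0 hpm hmnu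
  -- counting: C ∩ Ico x₀ (p (n+1)) ⊆ insert m (C ∩ Ico (p n) m)
  have hsub : C ∩ Set.Ico x₀ (p (n+1)) ⊆ insert m (C ∩ Set.Ico (p n) m) := by
    intro z hz
    have hznu : nuP p z = n := nuP_eq p hp0 hpm (le_trans hx₀mem.1 hz.2.1) hz.2.2
    have hzm : z ≤ m := hmax z hz.1 hznu
    rcases eq_or_lt_of_le hzm with rfl | hlt
    · exact Set.mem_insert _ _
    · exact Set.mem_insert_of_mem _ ⟨hz.1, le_trans hx₀mem.1 hz.2.1, hlt⟩
  have hfin1 : (C ∩ Set.Ico (p n) m).Finite :=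
    (Set.finite_Ico _ _).subset Set.inter_subset_right
  have hle1 : (C ∩ Set.Ico x₀ (p (n+1))).ncard ≤ (C ∩ Set.Ico (p n) m).ncard + 1 :=
    le_trans (Set.ncard_le_ncard hsub (hfin1.insert m)) (Set.ncard_insert_le _ _)
  -- a A₀ m bounds the count
  have hasub : C ∩ Set.Ico (p n) m ⊆ A₀ ∩ Set.Ico (p n) m :=
    Set.inter_subset_inter_left _ (fun z hz => hz.1.2)
  have hfin2 : (A₀ ∩ Set.Ico (p n) m).Finite :=
    (Set.finite_Ico _ _).subset Set.inter_subset_right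
  have hle2 : (C ∩ Set.Ico (p n) m).ncard ≤ (A₀ ∩ Set.Ico (p n) m).ncard :=
    Set.ncard_le_ncard hasub hfin2
  have ham : a A₀ m = (A₀ ∩ Set.Ico (p n) m).ncard := (hab A₀ n m hmmem.1 hmmem.2).1
  have hamh : a A₀ m ≤ h m := hmC.2
  have hhm : h m = h x₀ := hconst m hmC.1.1 x₀ hx₀C.1.1 (hmnu.trans hn)
  have hbC : b C x₀ = (C ∩ Set.Ico x₀ (p (n+1))).ncard := (hab C n x₀ hx₀mem.1 hx₀mem.2).2
  omega

end Main4

section Main5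
variable (U : Ultrafilter ℕ) (p : ℕ → ℕ)

lemma mem_infinite (hNP : ∀ A : Set ℕ, A.Finite → A ∉ U) (S : Set ℕ) (hS : S ∈ U) : S.Infinite := by
  by_contra hfin
  rw [Set.not_infinite] at hfin
  exact hNP S hfin hS

lemma exists_same_pair (hp0 : p 0 = 0) (hpm : StrictMono p)
    (hsel : ¬ ∃ A ∈ U, ∀ n, (A ∩ Set.Ico (p n) (p (n+1))).Subsingleton)
    (B : Set ℕ) (hBU : B ∈ U) :
    ∃ x ∈ B, ∃ y ∈ B, x < y ∧ nuP p x = nuP p y := by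
  by_contra hcon
  push_neg at hcon
  refine not_selection U p hp0 hpm hsel B (fun x hx y hy hnu => ?_) hBU
  rcases lt_trichotomy x y with hlt | heq | hgt
  · exact absurd hnu (hcon x hx y hy hlt)
  · exact heq
  · exact absurd hnu.symm (hcon y hy x hx hgt)

lemma exists_beyond (hp0 : p 0 = 0) (hpm : StrictMono p) (hNP : ∀ A : Set ℕ, A.Finite → A ∉ U)
    (B : Set ℕ) (hBU : B ∈ U) (t : ℕ) :
    ∃ y ∈ B, t < y ∧ p t ≤ y := by
  obtain ⟨y, hyB, hy⟩ := (mem_infinite U hNP B hBU).exists_gt (max t (p t))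
  exact ⟨y, hyB, lt_of_le_of_lt (le_max_left _ _) hy,
    le_of_lt (lt_of_le_of_lt (le_max_right _ _) hy)⟩

lemma nuP_ne_of_beyond (hp0 : p 0 = 0) (hpm : StrictMono p) {x y : ℕ}
    (hy : p (nuP p x + 1) ≤ y) : nuP p y ≠ nuP p x := by
  intro hc
  have h1 := (nuP_mem p hp0 hpm hc).2
  omega

lemma fin_trick : ∀ i j a c d : Fin 4, (a = i ∨ a = j) → (c = i ∨ c = j) →
    (d = i ∨ d = j) → d ≠ a → d ≠ c → a = c := by decide

end Main5

lemma ne01_23 : ∀ u v : Fin 4, (u = 0 ∨ u = 1) → (v = 2 ∨ v = 3) → v ≠ u := by decide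

lemma ncard_Iic (k : ℕ) : (Set.Iic k).ncard = k + 1 := by
  rw [← Finset.coe_Iic, Set.ncard_coe_finset, Nat.card_Iic]

section Main6
variable (U : Ultrafilter ℕ) (p : ℕ → ℕ)

lemma qs_of_le_h (hp0 : p 0 = 0) (hpm : StrictMono p)
    (hNP : ∀ A : Set ℕ, A.Finite → A ∉ U)
    (hWR : ∀ (k : ℕ) (c : ℕ → ℕ → Fin k), ∃ A ∈ U, ∃ i j : Fin k,
      ∀ x ∈ A, ∀ y ∈ A, x < y → c x y = i ∨ c x y = j)
    (hsel : ¬ ∃ A ∈ U, ∀ n, (A ∩ Set.Ico (p n) (p (n+1))).Subsingleton)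
    (b : Set ℕ → ℕ → ℕ)
    (habb : ∀ (A : Set ℕ) (n x : ℕ), p n ≤ x → x < p (n+1) →
      b A x = (A ∩ Set.Ico x (p (n+1))).ncard)
    (h : ℕ → ℕ) (hb : ∀ A ∈ U, {x | h x < b A x} ∈ U)
    (g : ℕ → ℕ) (hg : {x | g x ≤ h x} ∈ U) :
    ∃ B ∈ U, ∀ x ∈ B, ∀ y ∈ B, x ≤ y → g x ≤ g y := by
  classical
  set cl : ℕ → ℕ → Fin 4 := fun x y =>
    if nuP p x = nuP p y then (if g x ≤ g y then 0 else 1)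
    else (if g x ≤ g y then 2 else 3) with hcl
  obtain ⟨B, hBU, i, j, hB⟩ := hWR 4 cl
  obtain ⟨x₁, hx₁B, y₁, hy₁B, hlt₁, hnu₁⟩ := exists_same_pair U p hp0 hpm hsel B hBU
  obtain ⟨y₂, hy₂B, hlt₂', hp₂⟩ := exists_beyond U p hp0 hpm hNP B hBU (nuP p x₁ + 1)
  have hlt₂ : x₁ < y₂ := lt_of_lt_of_le (nuP_lt p hpm x₁) hp₂
  have hnu₂ : nuP p y₂ ≠ nuP p x₁ := nuP_ne_of_beyond p hp0 hpm hp₂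
  -- the two reference colors
  have hks : cl x₁ y₁ = 0 ∨ cl x₁ y₁ = 1 := by
    simp only [hcl, if_pos hnu₁]
    split_ifs <;> simp
  have hkd : cl x₁ y₂ = 2 ∨ cl x₁ y₂ = 3 := by
    simp only [hcl, if_neg (Ne.symm hnu₂)]
    split_ifs <;> simp
  have hksij := hB x₁ hx₁B y₁ hy₁B hlt₁
  have hkdij := hB x₁ hx₁B y₂ hy₂B hlt₂
  -- uniformity on same-interval pairs
  have hsame : ∀ x ∈ B, ∀ y ∈ B, x < y → nuP p x = nuP p y →
      (g x ≤ g y ↔ g x₁ ≤ g y₁) := by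
    intro x hx y hy hxy hnu
    have hval : cl x y = 0 ∨ cl x y = 1 := by
      simp only [hcl, if_pos hnu]
      split_ifs <;> simp
    have heq : cl x y = cl x₁ y₁ :=
      fin_trick i j (cl x y) (cl x₁ y₁) (cl x₁ y₂) (hB x hx y hy hxy) hksij hkdij
        (ne01_23 _ _ hval hkd) (ne01_23 _ _ hks hkd)
    simp only [hcl, if_pos hnu, if_pos hnu₁] at heq
    constructor
    · intro hgxy
      by_contra hc
      rw [if_pos hgxy, if_neg hc] at heq
      exact absurd heq (by decide)
    · intro hgxy
      by_contra hc
      rw [if_neg hc, if_pos hgxy] at heq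
      exact absurd heq (by decide)
  -- uniformity on different-interval pairs
  have hdiff : ∀ x ∈ B, ∀ y ∈ B, x < y → nuP p x ≠ nuP p y →
      (g x ≤ g y ↔ g x₁ ≤ g y₂) := by
    intro x hx y hy hxy hnu
    have hval : cl x y = 2 ∨ cl x y = 3 := by
      simp only [hcl, if_neg hnu]
      split_ifs <;> simp
    have heq : cl x y = cl x₁ y₂ :=
      (fin_trick i j (cl x₁ y₂) (cl x y) (cl x₁ y₁) hkdij (hB x hx y hy hxy) hksij
        (ne01_23 _ _ hks hkd).symm.symm.symm ((ne01_23 _ _ hks hval)).symm.symm.symm).symm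
    simp only [hcl, if_neg hnu, if_neg (Ne.symm hnu₂)] at heq
    constructor
    · intro hgxy
      by_contra hc
      rw [if_pos hgxy, if_neg hc] at heq
      exact absurd heq (by decide)
    · intro hgxy
      by_contra hc
      rw [if_neg hc, if_pos hgxy] at heq
      exact absurd heq (by decide)
  by_cases htau : g x₁ ≤ g y₂
  · by_cases hsig : g x₁ ≤ g y₁
    · -- nondecreasing on B
      refine ⟨B, hBU, fun x hx y hy hxy => ?_⟩
      rcases eq_or_lt_of_le hxy with rfl | hlt
      · exact le_refl _
      · by_cases hnu : nuP p x = nuP p y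
        · exact (hsame x hx y hy hlt hnu).2 hsig
        · exact (hdiff x hx y hy hlt hnu).2 htau
    · -- hard case: strictly decreasing inside intervals
      exfalso
      set C : Set ℕ := B ∩ {x | g x ≤ h x} with hCdef
      have hCU : C ∈ U := Filter.inter_mem hBU hg
      have hE : {x | h x + 1 < b C x} ∈ U :=
        gap_lemma U p hp0 hpm hsel b habb h hb 1 C hCU
      obtain ⟨x₀, hx₀C, hx₀E⟩ := Ultrafilter.nonempty_of_mem (Filter.inter_mem hCU hE)
      simp only [Set.mem_setOf_eq] at hx₀E
      set n := nuP p x₀ with hn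
      have hx₀mem := nuP_mem p hp0 hpm hn.symm
      set F : Set ℕ := C ∩ Set.Ico x₀ (p (n+1)) with hF
      have hFnu : ∀ z ∈ F, nuP p z = n := fun z hz =>
        nuP_eq p hp0 hpm (le_trans hx₀mem.1 hz.2.1) hz.2.2
      have hdec : ∀ z ∈ F, ∀ z' ∈ F, z < z' → ¬ (g z ≤ g z') := by
        intro z hz z' hz' hzz'
        intro hc
        exact hsig ((hsame z hz.1.1 z' hz'.1.1 hzz' ((hFnu z hz).trans (hFnu z' hz').symm)).1 hc)
      have hinj : Set.InjOn g F := by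
        intro z hz z' hz' hgz
        by_contra hne
        rcases lt_or_gt_of_ne hne with hlt | hlt
        · exact hdec z hz z' hz' hlt (le_of_eq hgz)
        · exact hdec z' hz' z hz hlt (le_of_eq hgz.symm)
      have himg : g '' F ⊆ Set.Iic (g x₀) := by
        rintro _ ⟨z, hz, rfl⟩
        refine Set.mem_Iic.2 ?_
        rcases eq_or_lt_of_le hz.2.1 with rfl | hlt
        · exact le_refl _
        · have := hdec x₀ ⟨hx₀C, le_refl _, hx₀mem.2⟩ z hz hlt
          omega
      have hFfin : F.Finite := (Set.finite_Ico _ _).subset Set.inter_subset_right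
      have hcard1 : F.ncard = (g '' F).ncard := (Set.ncard_image_of_injOn hinj).symm
      have hcard2 : (g '' F).ncard ≤ g x₀ + 1 := by
        have := Set.ncard_le_ncard himg (Set.finite_Iic _)
        rwa [ncard_Iic] at this
      have hbC : b C x₀ = F.ncard := habb C n x₀ hx₀mem.1 hx₀mem.2
      have hgh : g x₀ ≤ h x₀ := hx₀C.2
      omega
  · -- diff pairs strictly decreasing: contradiction with minimality
    exfalso
    have hBne : B.Nonempty := ⟨x₁, hx₁B⟩
    have hne : (g '' B).Nonempty := hBne.image g
    obtain ⟨x₀, hx₀B, hx₀v⟩ := Nat.sInf_mem hne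
    obtain ⟨y, hyB, hty, hpy⟩ := exists_beyond U p hp0 hpm hNP B hBU (nuP p x₀ + 1)
    have hx₀y : x₀ < y := lt_of_lt_of_le (nuP_lt p hpm x₀) hpy
    have hnuy : nuP p y ≠ nuP p x₀ := nuP_ne_of_beyond p hp0 hpm hpy
    have := (hdiff x₀ hx₀B y hyB hx₀y (Ne.symm hnuy)).not.2 htau
    have hmin : g x₀ ≤ g y := by
      rw [hx₀v]
      exact Nat.sInf_le ⟨y, hyB, rfl⟩
    exact this hmin
end Main6

lemma ne02_13 : ∀ u v : Fin 4, (u = 0 ∨ u = 2) → (v = 1 ∨ v = 3) → v ≠ u := by decide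

section Main7
variable (U : Ultrafilter ℕ) (p : ℕ → ℕ)

lemma h_injective (hp0 : p 0 = 0) (hpm : StrictMono p)
    (hNP : ∀ A : Set ℕ, A.Finite → A ∉ U)
    (hWR : ∀ (k : ℕ) (c : ℕ → ℕ → Fin k), ∃ A ∈ U, ∃ i j : Fin k,
      ∀ x ∈ A, ∀ y ∈ A, x < y → c x y = i ∨ c x y = j)
    (hsel : ¬ ∃ A ∈ U, ∀ n, (A ∩ Set.Ico (p n) (p (n+1))).Subsingleton)
    (a b : Set ℕ → ℕ → ℕ)
    (hab : ∀ (A : Set ℕ) (n x : ℕ), p n ≤ x → x < p (n+1) →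
      a A x = (A ∩ Set.Ico (p n) x).ncard ∧ b A x = (A ∩ Set.Ico x (p (n+1))).ncard)
    (h : ℕ → ℕ) (A₀ : Set ℕ) (hA₀U : A₀ ∈ U) (hA₀ : {x | a A₀ x ≤ h x} ∈ U)
    (hb : ∀ A ∈ U, {x | h x < b A x} ∈ U) :
    ∃ B ∈ U, Set.InjOn h B := by
  classical
  set cl : ℕ → ℕ → Fin 4 := fun x y =>
    if h x = h y then (if nuP p x = nuP p y then 0 else 1)
    else (if nuP p x = nuP p y then 2 else 3) with hcl
  obtain ⟨B, hBU, i, j, hB⟩ := hWR 4 cl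
  obtain ⟨x₁, hx₁B, y₁, hy₁B, hlt₁, hnu₁⟩ := exists_same_pair U p hp0 hpm hsel B hBU
  obtain ⟨y₂, hy₂B, hlt₂', hp₂⟩ := exists_beyond U p hp0 hpm hNP B hBU (nuP p x₁ + 1)
  have hlt₂ : x₁ < y₂ := lt_of_lt_of_le (nuP_lt p hpm x₁) hp₂
  have hnu₂ : nuP p y₂ ≠ nuP p x₁ := nuP_ne_of_beyond p hp0 hpm hp₂
  have hks : cl x₁ y₁ = 0 ∨ cl x₁ y₁ = 2 := by
    by_cases h1 : h x₁ = h y₁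
    · left; simp [hcl, h1, hnu₁]
    · right; simp [hcl, h1, hnu₁]
  have hnn₂ : nuP p x₁ ≠ nuP p y₂ := fun hc => hnu₂ hc.symm
  have hkd : cl x₁ y₂ = 1 ∨ cl x₁ y₂ = 3 := by
    by_cases h1 : h x₁ = h y₂
    · left; simp [hcl, h1, hnn₂]
    · right; simp [hcl, h1, hnn₂]
  have hksij := hB x₁ hx₁B y₁ hy₁B hlt₁
  have hkdij := hB x₁ hx₁B y₂ hy₂B hlt₂
  have hsame : ∀ x ∈ B, ∀ y ∈ B, x < y → nuP p x = nuP p y →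
      (h x = h y ↔ h x₁ = h y₁) := by
    intro x hx y hy hxy hnu
    have hval : cl x y = 0 ∨ cl x y = 2 := by
      by_cases h1 : h x = h y
      · left; simp [hcl, h1, hnu]
      · right; simp [hcl, h1, hnu]
    have heq : cl x y = cl x₁ y₁ :=
      fin_trick i j (cl x y) (cl x₁ y₁) (cl x₁ y₂) (hB x hx y hy hxy) hksij hkdij
        (ne02_13 _ _ hval hkd) (ne02_13 _ _ hks hkd)
    simp only [hcl, if_pos hnu, if_pos hnu₁] at heq
    constructor
    · intro hgxy
      by_contra hc
      rw [if_pos hgxy, if_neg hc] at heq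
      exact absurd heq (by decide)
    · intro hgxy
      by_contra hc
      rw [if_neg hc, if_pos hgxy] at heq
      exact absurd heq (by decide)
  have hdiff : ∀ x ∈ B, ∀ y ∈ B, x < y → nuP p x ≠ nuP p y →
      (h x = h y ↔ h x₁ = h y₂) := by
    intro x hx y hy hxy hnu
    have hval : cl x y = 1 ∨ cl x y = 3 := by
      by_cases h1 : h x = h y
      · left; simp [hcl, h1, hnu]
      · right; simp [hcl, h1, hnu]
    have heq : cl x y = cl x₁ y₂ :=
      fin_trick i j (cl x y) (cl x₁ y₂) (cl x₁ y₁) (hB x hx y hy hxy) hkdij hksij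
        (ne02_13 _ _ hks hval).symm.symm.symm
        (ne02_13 _ _ hks hkd).symm.symm.symm
    simp only [hcl, if_neg hnu, if_neg (Ne.symm hnu₂)] at heq
    constructor
    · intro hgxy
      by_contra hc
      rw [if_pos hgxy, if_neg hc] at heq
      exact absurd heq (by decide)
    · intro hgxy
      by_contra hc
      rw [if_neg hc, if_pos hgxy] at heq
      exact absurd heq (by decide)
  by_cases hs : h x₁ = h y₁
  · -- h is interval-determined on B : contradiction
    exfalso
    refine no_interval_constant U p hp0 hpm hsel a b hab h A₀ hA₀U hA₀ hb B hBU ?_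
    intro x hx y hy hnu
    rcases lt_trichotomy x y with hlt | rfl | hgt
    · exact (hsame x hx y hy hlt hnu).2 hs
    · rfl
    · exact ((hsame y hy x hx hgt hnu.symm).2 hs).symm
  · by_cases hd : h x₁ = h y₂
    · -- diff pairs all h-equal : three point contradiction
      exfalso
      obtain ⟨w, hwB, hw', hpw⟩ := exists_beyond U p hp0 hpm hNP B hBU (nuP p y₁ + 1)
      have hwy₁ : y₁ < w := lt_of_lt_of_le (nuP_lt p hpm y₁) hpw
      have hwx₁ : x₁ < w := lt_trans hlt₁ hwy₁
      have hnuw₁ : nuP p w ≠ nuP p y₁ := nuP_ne_of_beyond p hp0 hpm hpw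
      have hnuwx : nuP p x₁ ≠ nuP p w := fun hc => hnuw₁ (hc.symm.trans hnu₁)
      have h1 : h x₁ = h w := (hdiff x₁ hx₁B w hwB hwx₁ hnuwx).2 hd
      have h2 : h y₁ = h w := (hdiff y₁ hy₁B w hwB hwy₁ (Ne.symm hnuw₁)).2 hd
      exact hs (h1.trans h2.symm)
    · -- all pairs h-distinct : injective
      refine ⟨B, hBU, fun x hx y hy hxy => ?_⟩
      by_contra hne
      rcases lt_or_gt_of_ne hne with hlt | hlt
      · by_cases hnu : nuP p x = nuP p y
        · exact hs ((hsame x hx y hy hlt hnu).1 hxy)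
        · exact hd ((hdiff x hx y hy hlt hnu).1 hxy)
      · by_cases hnu : nuP p y = nuP p x
        · exact hs ((hsame y hy x hx hlt hnu).1 hxy.symm)
        · exact hd ((hdiff y hy x hx hlt hnu).1 hxy.symm)
end Main7


theorem stmt18 (U : Ultrafilter ℕ) (hNP : Nonprincipal U) (hWR : WeaklyRamsey U)
    (p : ℕ → ℕ) (hp0 : p 0 = 0) (hpm : StrictMono p)
    (hsel : ¬ ∃ A ∈ U, ∀ n, (A ∩ Set.Ico (p n) (p (n+1))).Subsingleton)
    (a b : Set ℕ → ℕ → ℕ)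
    (hab : ∀ (A : Set ℕ) (n x : ℕ), p n ≤ x → x < p (n+1) →
      a A x = (A ∩ Set.Ico (p n) x).ncard ∧ b A x = (A ∩ Set.Ico x (p (n+1))).ncard)
    (hAB : ∃ h : ℕ → ℕ, (∃ A ∈ U, leU U (a A) h) ∧ (∀ A ∈ U, {x | h x < b A x} ∈ U)) :
    (∃ f : ℕ → ℕ, (∃ A ∈ U, Set.InjOn f A) ∧ QSfor U f) ∧
    (∃ φ : ℕ → ℕ, Function.Injective φ ∧ QSfor (Ultrafilter.map φ U) id) := by 

  classical
  obtain ⟨h, ⟨A₀, hA₀U, hA₀le⟩, hb⟩ := hAB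
  have habb : ∀ (A : Set ℕ) (n x : ℕ), p n ≤ x → x < p (n+1) →
      b A x = (A ∩ Set.Ico x (p (n+1))).ncard := fun A n x h1 h2 => (hab A n x h1 h2).2
  have hQS : ∀ g : ℕ → ℕ, {x | g x ≤ h x} ∈ U →
      ∃ A ∈ U, ∀ x ∈ A, ∀ y ∈ A, x ≤ y → g x ≤ g y :=
    fun g hg => qs_of_le_h U p hp0 hpm hNP hWR hsel b habb h hb g hg
  obtain ⟨B, hBU, hinj⟩ :=
    h_injective U p hp0 hpm hNP hWR hsel a b hab h A₀ hA₀U hA₀le hb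
  refine ⟨⟨h, ⟨B, hBU, hinj⟩, hQS⟩, ?_⟩
  set φ : ℕ → ℕ := fun x => if x ∈ B then 2 * h x else 2 * x + 1 with hφ
  have hφB : ∀ x ∈ B, φ x = 2 * h x := fun x hx => if_pos hx
  have hφN : ∀ x, x ∉ B → φ x = 2 * x + 1 := fun x hx => if_neg hx
  refine ⟨φ, ?_, ?_⟩
  · intro x y hxy
    by_cases hx : x ∈ B <;> by_cases hy : y ∈ B
    · rw [hφB x hx, hφB y hy] at hxy
      exact hinj hx hy (by omega)
    · rw [hφB x hx, hφN y hy] at hxy; omega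
    · rw [hφN x hx, hφB y hy] at hxy; omega
    · rw [hφN x hx, hφN y hy] at hxy; omega
  · intro g hg
    have hgU : φ ⁻¹' {x | g x ≤ id x} ∈ U := Ultrafilter.mem_map.1 hg
    set g₁ : ℕ → ℕ := fun x => g (φ x) / 2 with hg₁
    set g₂ : ℕ → ℕ := fun x => (g (φ x) + 1) / 2 with hg₂
    have hsum : ∀ x, g₁ x + g₂ x = g (φ x) := by
      intro x; simp only [hg₁, hg₂]; omega
    have hg₁U : {x | g₁ x ≤ h x} ∈ U := by
      refine Filter.mem_of_superset (Filter.inter_mem hBU hgU) ?_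
      rintro x ⟨hxB, hxg⟩
      simp only [Set.mem_preimage, Set.mem_setOf_eq, id] at hxg ⊢
      rw [hφB x hxB] at hxg
      simp only [hg₁]
      rw [hφB x hxB]
      omega
    have hg₂U : {x | g₂ x ≤ h x} ∈ U := by
      refine Filter.mem_of_superset (Filter.inter_mem hBU hgU) ?_
      rintro x ⟨hxB, hxg⟩
      simp only [Set.mem_preimage, Set.mem_setOf_eq, id] at hxg ⊢
      rw [hφB x hxB] at hxg
      simp only [hg₂]
      rw [hφB x hxB]
      omega
    have huniv : {x | h x ≤ h x} ∈ U := Filter.univ_mem' (fun x => Set.mem_setOf_eq ▸ le_refl (h x))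
    obtain ⟨D₀, hD₀U, hD₀⟩ := hQS h huniv
    obtain ⟨D₁, hD₁U, hD₁⟩ := hQS g₁ hg₁U
    obtain ⟨D₂, hD₂U, hD₂⟩ := hQS g₂ hg₂U
    set D : Set ℕ := B ∩ (φ ⁻¹' {x | g x ≤ id x}) ∩ D₀ ∩ D₁ ∩ D₂ with hD
    have hDU : D ∈ U :=
      Filter.inter_mem (Filter.inter_mem (Filter.inter_mem
        (Filter.inter_mem hBU hgU) hD₀U) hD₁U) hD₂U
    refine ⟨φ '' D, ?_, ?_⟩
    · exact Ultrafilter.mem_map.2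
        (Filter.mem_of_superset hDU (Set.subset_preimage_image φ D))
    · rintro u ⟨x, hxD, rfl⟩ v ⟨y, hyD, rfl⟩ huv
      obtain ⟨⟨⟨⟨hxB, hxg⟩, hxD₀⟩, hxD₁⟩, hxD₂⟩ := hxD
      obtain ⟨⟨⟨⟨hyB, hyg⟩, hyD₀⟩, hyD₁⟩, hyD₂⟩ := hyD
      rcases le_total x y with hxy | hyx
      · have e1 := hsum x
        have e2 := hsum y
        have l1 := hD₁ x hxD₁ y hyD₁ hxy
        have l2 := hD₂ x hxD₂ y hyD₂ hxy
        omega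
      · have hh : h y ≤ h x := hD₀ y hyD₀ x hxD₀ hyx
        have hle : φ y ≤ φ x := by rw [hφB x hxB, hφB y hyB]; omega
        have heq : φ x = φ y := le_antisymm huv hle
        rw [heq]
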